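/- arXiv:1612.08154 — 3 statements merged into one kernel-verified Lean document; each statement's English description precedes it below -/
import Mathlib

section
/- Let Q₁ and Q₂ be complete deterministic automata over Σ and let (u,v) ∈ Σ* × Σ⁺. Let (u·v^{i₁}, v^{j₁}) and (u·v^{i₂}, v^{j₂}) be the normalizations of (u,v) with respect to Q₁ and Q₂ respectively. Then the normalization of (u,v) with respect to the product automaton Q₁ × Q₂ is (u·v^i, v^j) where i = max(i₁, i₂) and j = lcm(j₁, j₂). -/
open Classical

/-- `wpow v n` is the word `v` repeated `n` times. -/
def wpow {α : Type} (v : List α) : ℕ → List α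
  | 0 => []
  | n + 1 => wpow v n ++ v

/-- The ultimately periodic infinite word `u·v^ω` (meaningful when `v ≠ []`). -/
def upWord {α : Type} [Inhabited α] (u v : List α) : ℕ → α := fun n =>
  if n < u.length then u.getD n default
  else v.getD ((n - u.length) % v.length) default

/-- `l` is a prefix of the infinite word `w`. -/
def prefOf {α : Type} [Inhabited α] (l : List α) (w : ℕ → α) : Prop :=
  ∀ i < l.length, w i = l.getD i default

/-- A complete deterministic automaton (no acceptance condition). -/
structure DetAuto (α : Type) : Type 1 where
  State : Type
  [fin : Fintype State]
  init : State
  step : State → α → State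

attribute [instance] DetAuto.fin

namespace DetAuto

variable {α : Type}

/-- The state reached from `q` after reading the finite word `w`. -/
def run (A : DetAuto α) (q : A.State) (w : List α) : A.State := w.foldl A.step q

/-- The state reached from the initial state after reading `w`. -/
def eval (A : DetAuto α) (w : List α) : A.State := A.run A.init w

/-- The (infinite) run of `A` on an infinite word `w`. -/
def runSeq (A : DetAuto α) (w : ℕ → α) : ℕ → A.State
  | 0 => A.init
  | n + 1 => A.step (A.runSeq w n) (w n)

lemma exists_rep (A : DetAuto α) (u v : List α) :
    ∃ i, ∃ j, 1 ≤ j ∧ A.eval (u ++ wpow v i) = A.eval (u ++ wpow v (i + j)) := by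
  obtain ⟨a, b, hab, hfab⟩ :=
    Finite.exists_ne_map_eq_of_infinite (fun n : ℕ => A.eval (u ++ wpow v n))
  rcases Nat.lt_or_gt_of_ne hab with h | h
  · exact ⟨a, b - a, by omega, by rw [Nat.add_sub_cancel' h.le]; exact hfab⟩
  · exact ⟨b, a - b, by omega, by rw [Nat.add_sub_cancel' h.le]; exact hfab.symm⟩

/-- The least `i` in the normalization of `(u,v)` w.r.t. `A`. -/
noncomputable def normI (A : DetAuto α) (u v : List α) : ℕ :=
  Nat.find (A.exists_rep u v)

lemma normI_spec (A : DetAuto α) (u v : List α) :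
    ∃ j, 1 ≤ j ∧ A.eval (u ++ wpow v (A.normI u v))
      = A.eval (u ++ wpow v (A.normI u v + j)) :=
  Nat.find_spec (A.exists_rep u v)

/-- The least `j` in the normalization of `(u,v)` w.r.t. `A`. -/
noncomputable def normJ (A : DetAuto α) (u v : List α) : ℕ :=
  Nat.find (A.normI_spec u v)

/-- The normalization `(x, y) = (u·v^i, v^j)` of `(u,v)` w.r.t. `A`. -/
noncomputable def normalize (A : DetAuto α) (u v : List α) : List α × List α :=
  (u ++ wpow v (A.normI u v), wpow v (A.normJ u v))

/-- The product automaton. -/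
def prod (A B : DetAuto α) : DetAuto α where
  State := A.State × B.State
  init := (A.init, B.init)
  step := fun p σ => (A.step p.1 σ, B.step p.2 σ)

end DetAuto

/-- A family of DFAs: a leading automaton and a progress DFA for each of its states. -/
structure FDFA (α : Type) : Type 1 where
  leading : DetAuto α
  pState : leading.State → Type
  [pFin : ∀ q, Fintype (pState q)]
  pInit : ∀ q, pState q
  pStep : ∀ q, pState q → α → pState q
  pAcc : ∀ q, Set (pState q)

attribute [instance] FDFA.pFin

namespace FDFA

variable {α : Type}

/-- The progress DFA at state `q` accepts the finite word `y`. -/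
def progAccept (F : FDFA α) (q : F.leading.State) (y : List α) : Prop :=
  y.foldl (F.pStep q) (F.pInit q) ∈ F.pAcc q

/-- `F` accepts the pair `(u, v)`: with `(x,y)` the normalization of `(u,v)` w.r.t.
the leading automaton, the progress DFA at the state reached on `x` accepts `y`. -/
noncomputable def Accept (F : FDFA α) (u v : List α) : Prop :=
  F.progAccept (F.leading.eval (F.leading.normalize u v).1) (F.leading.normalize u v).2

/-- `F` is saturated: acceptance of `(u,v)` depends only on the infinite word `u·v^ω`. -/
def Saturated [Inhabited α] (F : FDFA α) : Prop :=
  ∀ u v u' v' : List α, v ≠ [] → v' ≠ [] → upWord u v = upWord u' v' →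
    (F.Accept u v ↔ F.Accept u' v')

/-- The complement FDFA: same structure, complemented accepting states. -/
def compl (F : FDFA α) : FDFA α :=
  { F with pAcc := fun q => (F.pAcc q)ᶜ }

end FDFA

namespace DetAuto

variable {α : Type}

lemma eval_wpow_succ (A : DetAuto α) (u v : List α) (n : ℕ) :
    A.eval (u ++ wpow v (n+1)) = A.run (A.eval (u ++ wpow v n)) v := by
  show A.eval (u ++ (wpow v n ++ v)) = _
  rw [← List.append_assoc]
  simp [eval, run, List.foldl_append]

lemma eval_shift (A : DetAuto α) (u v : List α) {n m : ℕ}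
    (h : A.eval (u ++ wpow v n) = A.eval (u ++ wpow v m)) (t : ℕ) :
    A.eval (u ++ wpow v (n+t)) = A.eval (u ++ wpow v (m+t)) := by
  induction t with
  | zero => simpa
  | succ t ih =>
    rw [show n + (t+1) = (n+t)+1 by ring, show m + (t+1) = (m+t)+1 by ring,
      eval_wpow_succ, eval_wpow_succ, ih]

lemma normJ_pos (A : DetAuto α) (u v : List α) : 1 ≤ A.normJ u v :=
  (Nat.find_spec (A.normI_spec u v)).1

lemma norm_eq (A : DetAuto α) (u v : List α) :
    A.eval (u ++ wpow v (A.normI u v)) = A.eval (u ++ wpow v (A.normI u v + A.normJ u v)) :=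
  (Nat.find_spec (A.normI_spec u v)).2

/-- Periodicity with period normJ beyond normI. -/
lemma periodic (A : DetAuto α) (u v : List α) {n : ℕ} (hn : A.normI u v ≤ n) (m : ℕ) :
    A.eval (u ++ wpow v (n + m * A.normJ u v)) = A.eval (u ++ wpow v n) := by
  induction m with
  | zero => simp
  | succ m ih =>
    have h1 := A.eval_shift u v (A.norm_eq u v) (n - A.normI u v + m * A.normJ u v)
    rw [show A.normI u v + (n - A.normI u v + m * A.normJ u v) = n + m * A.normJ u v by omega,
      show A.normI u v + A.normJ u v + (n - A.normI u v + m * A.normJ u v)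
        = n + (m+1) * A.normJ u v by ring_nf; omega] at h1
    rw [← h1, ih]

lemma normI_min (A : DetAuto α) (u v : List α) {i j : ℕ} (hj : 1 ≤ j)
    (h : A.eval (u ++ wpow v i) = A.eval (u ++ wpow v (i + j))) :
    A.normI u v ≤ i := by
  by_contra hlt
  exact Nat.find_min (A.exists_rep u v) (by omega : i < A.normI u v) ⟨j, hj, h⟩

lemma normJ_dvd_base (A : DetAuto α) (u v : List α) {j : ℕ} (hj : 1 ≤ j)
    (h : A.eval (u ++ wpow v (A.normI u v)) = A.eval (u ++ wpow v (A.normI u v + j))) :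
    A.normJ u v ∣ j := by
  have hJ := A.normJ_pos u v
  set i₀ := A.normI u v
  set j₀ := A.normJ u v
  have hr : j % j₀ < j₀ := Nat.mod_lt _ (by omega)
  have h2 : A.eval (u ++ wpow v (i₀ + j)) = A.eval (u ++ wpow v (i₀ + j % j₀)) := by
    have := A.periodic u v (n := i₀ + j % j₀) (by omega) (j / j₀)
    rw [show i₀ + j % j₀ + j / j₀ * j₀ = i₀ + j by
      rw [Nat.add_assoc, Nat.mod_add_div']] at this
    exact this
  rw [h2] at h
  rcases Nat.eq_zero_or_pos (j % j₀) with h0 | h0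
  · exact Nat.dvd_of_mod_eq_zero h0
  · exact absurd ⟨h0, h⟩ (Nat.find_min (A.normI_spec u v) hr)

lemma normJ_dvd (A : DetAuto α) (u v : List α) {n j : ℕ} (hn : A.normI u v ≤ n) (hj : 1 ≤ j)
    (h : A.eval (u ++ wpow v n) = A.eval (u ++ wpow v (n + j))) :
    A.normJ u v ∣ j := by
  have hJ := A.normJ_pos u v
  set i₀ := A.normI u v
  set j₀ := A.normJ u v
  -- choose m = n so that i₀ + m * j₀ ≥ n
  have hm : n ≤ i₀ + n * j₀ := by nlinarith
  have hshift := A.eval_shift u v h (i₀ + n * j₀ - n)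
  rw [show n + (i₀ + n * j₀ - n) = i₀ + n * j₀ by omega,
      show n + j + (i₀ + n * j₀ - n) = (i₀ + j) + n * j₀ by omega] at hshift
  have p1 := A.periodic u v (n := i₀) le_rfl n
  have p2 := A.periodic u v (n := i₀ + j) (by omega) n
  apply A.normJ_dvd_base u v hj
  calc A.eval (u ++ wpow v i₀) = A.eval (u ++ wpow v (i₀ + n * j₀)) := p1.symm
    _ = A.eval (u ++ wpow v (i₀ + j + n * j₀)) := hshift
    _ = A.eval (u ++ wpow v (i₀ + j)) := p2

lemma prod_run (A B : DetAuto α) (p : A.State × B.State) (w : List α) :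
    (A.prod B).run p w = (A.run p.1 w, B.run p.2 w) := by
  induction w generalizing p with
  | nil => rfl
  | cons a w ih => exact ih ((A.prod B).step p a)

lemma prod_eval (A B : DetAuto α) (w : List α) :
    (A.prod B).eval w = (A.eval w, B.eval w) := prod_run A B _ w

end DetAuto


/-- The normalization of `(u,v)` w.r.t. the product automaton `Q₁ × Q₂`
is `(u·v^i, v^j)` with `i = max(i₁,i₂)` and `j = lcm(j₁,j₂)`, where `(u·v^{i₁}, v^{j₁})`
and `(u·v^{i₂}, v^{j₂})` are the normalizations w.r.t. `Q₁` and `Q₂`. -/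
theorem product_normalization {α : Type} (Q₁ Q₂ : DetAuto α) (u v : List α)
    (hv : v ≠ []) :
    (Q₁.prod Q₂).normI u v = max (Q₁.normI u v) (Q₂.normI u v) ∧
    (Q₁.prod Q₂).normJ u v = Nat.lcm (Q₁.normJ u v) (Q₂.normJ u v) := by
  set i₁ := Q₁.normI u v
  set i₂ := Q₂.normI u v
  set j₁ := Q₁.normJ u v
  set j₂ := Q₂.normJ u v
  have hj₁ : 1 ≤ j₁ := Q₁.normJ_pos u v
  have hj₂ : 1 ≤ j₂ := Q₂.normJ_pos u v
  set i := max i₁ i₂ with hi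
  set j := Nat.lcm j₁ j₂ with hj
  have hjpos : 1 ≤ j := Nat.lcm_pos hj₁ hj₂
  -- the product repeats at (i, j)
  have hrep : (Q₁.prod Q₂).eval (u ++ wpow v i)
      = (Q₁.prod Q₂).eval (u ++ wpow v (i + j)) := by
    rw [DetAuto.prod_eval, DetAuto.prod_eval]; refine Prod.ext_iff.mpr ?_
    constructor
    · have := Q₁.periodic u v (n := i) (le_max_left _ _) (j / j₁)
      rwa [Nat.div_mul_cancel (Nat.dvd_lcm_left _ _), eq_comm] at this
    · have := Q₂.periodic u v (n := i) (le_max_right _ _) (j / j₂)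
      rwa [Nat.div_mul_cancel (Nat.dvd_lcm_right _ _), eq_comm] at this
  have hI : (Q₁.prod Q₂).normI u v = i := by
    rw [DetAuto.normI, Nat.find_eq_iff]
    refine ⟨⟨j, hjpos, hrep⟩, ?_⟩
    rintro m hm ⟨j', hj', h⟩
    rw [DetAuto.prod_eval, DetAuto.prod_eval] at h; replace h := Prod.ext_iff.mp h
    rcases max_cases i₁ i₂ with ⟨he, _⟩ | ⟨he, _⟩
    · exact absurd (Q₁.normI_min u v hj' h.1) (by omega)
    · exact absurd (Q₂.normI_min u v hj' h.2) (by omega)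
  refine ⟨hI, ?_⟩
  rw [DetAuto.normJ, Nat.find_eq_iff]
  rw [hI]
  refine ⟨⟨hjpos, hrep⟩, ?_⟩
  rintro j' hj' ⟨hj'1, h⟩
  rw [DetAuto.prod_eval, DetAuto.prod_eval] at h; replace h := Prod.ext_iff.mp h
  have d1 : j₁ ∣ j' := Q₁.normJ_dvd u v (le_max_left _ _) hj'1 h.1
  have d2 : j₂ ∣ j' := Q₂.normJ_dvd u v (le_max_right _ _) hj'1 h.2
  have : j ∣ j' := Nat.lcm_dvd d1 d2
  have := Nat.le_of_dvd (by omega) this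
  omega
end

section
/- Let F₁ and F₂ be saturated FDFAs with leading automata Q₁, Q₂. Define H' as the FDFA with leading automaton Q₁ × Q₂ and, for each state (q₁,q₂), the progress DFA P¹_{q₁} ⊕ P²_{q₂} whose accepting states are pairs where at least one component is accepting. Then L(H') = L(F₁) ∪ L(F₂), and H' is saturated. -/
open Classical

/-- The union-product FDFA: product leading automaton, product progress DFAs with
accepting states `(F₁ × A₂) ∪ (A₁ × F₂)`. -/
def FDFA.union {α : Type} (F G : FDFA α) : FDFA α where
  leading := F.leading.prod G.leading
  pState := fun q => F.pState q.1 × G.pState q.2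
  pInit := fun q => (F.pInit q.1, G.pInit q.2)
  pStep := fun q p σ => (F.pStep q.1 p.1 σ, G.pStep q.2 p.2 σ)
  pAcc := fun q => {p | p.1 ∈ F.pAcc q.1 ∨ p.2 ∈ G.pAcc q.2}

lemma wpow_length {α : Type} (v : List α) (n : ℕ) :
    (wpow v n).length = n * v.length := by
  induction n with
  | zero => simp [wpow]
  | succ n ih => simp [wpow, ih, Nat.succ_mul]

lemma wpow_add {α : Type} (v : List α) (m n : ℕ) :
    wpow v (m + n) = wpow v m ++ wpow v n := by
  induction n with
  | zero => simp [wpow]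
  | succ n ih => simp [wpow, ih, ← Nat.add_assoc, List.append_assoc]

lemma wpow_getD {α : Type} [Inhabited α] (v : List α) (hv : v ≠ []) (i m : ℕ)
    (hm : m < i * v.length) :
    (wpow v i).getD m default = v.getD (m % v.length) default := by
  have hV : 0 < v.length := List.length_pos_iff.mpr hv
  induction i with
  | zero => simp [wpow_length] at hm
  | succ i ih =>
    rw [wpow]
    by_cases h : m < i * v.length
    · rw [List.getD_append _ _ _ _ (by rw [wpow_length]; exact h)]
      exact ih h
    · have hlen : (wpow v i).length ≤ m := by rw [wpow_length]; omega
      rw [List.getD_append_right _ _ _ _ hlen, wpow_length]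
      have hm2 : m - i * v.length < v.length := by
        have := hm; rw [Nat.succ_mul] at this; omega
      have hmod : m % v.length = m - i * v.length := by
        have hrw : m = (m - i * v.length) + i * v.length := by omega
        conv_lhs => rw [hrw]
        rw [Nat.add_mul_mod_self_right, Nat.mod_eq_of_lt hm2]
      rw [hmod]

lemma upWord_norm {α : Type} [Inhabited α] (u v : List α) (hv : v ≠ []) (i j : ℕ)
    (hj : 1 ≤ j) :
    upWord (u ++ wpow v i) (wpow v j) = upWord u v := by
  funext n
  have hV : 0 < v.length := List.length_pos_iff.mpr hv
  unfold upWord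
  rw [List.length_append, wpow_length, wpow_length]
  by_cases h1 : n < u.length
  · rw [if_pos (by omega), if_pos h1, List.getD_append _ _ _ _ h1]
  · rw [if_neg h1]
    by_cases h2 : n < u.length + i * v.length
    · rw [if_pos h2, List.getD_append_right _ _ _ _ (le_of_not_gt h1)]
      exact wpow_getD v hv i _ (by omega)
    · rw [if_neg h2]
      have hjV : 0 < j * v.length := by positivity
      rw [wpow_getD v hv j _ (Nat.mod_lt _ hjV),
        Nat.mod_mod_of_dvd _ ⟨j, by ring⟩]
      congr 1
      have hre : n - u.length = (n - (u.length + i * v.length)) + i * v.length := by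
        omega
      rw [hre, Nat.add_mul_mod_self_right]

lemma prod_run {α : Type} (A B : DetAuto α) (p : A.State) (q : B.State)
    (w : List α) : (A.prod B).run (p, q) w = (A.run p w, B.run q w) := by
  induction w generalizing p q with
  | nil => rfl
  | cons a w ih =>
    show (A.prod B).run (A.step p a, B.step q a) w = _
    rw [ih]; rfl

lemma prod_eval {α : Type} (A B : DetAuto α) (w : List α) :
    (A.prod B).eval w = (A.eval w, B.eval w) :=
  prod_run A B A.init B.init w

lemma normI_eq_zero {α : Type} (A : DetAuto α) (x y : List α)
    (h : A.eval (x ++ y) = A.eval x) : A.normI x y = 0 := by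
  unfold DetAuto.normI
  rw [Nat.find_eq_zero]
  exact ⟨1, le_refl 1, by simp [wpow]; exact h.symm⟩

lemma normJ_eq_one {α : Type} (A : DetAuto α) (x y : List α)
    (h : A.eval (x ++ y) = A.eval x) : A.normJ x y = 1 := by
  unfold DetAuto.normJ
  rw [Nat.find_eq_iff]
  refine ⟨⟨le_refl 1, ?_⟩, ?_⟩
  · rw [normI_eq_zero A x y h]
    simp [wpow]; exact h.symm
  · intro n hn hc
    exact absurd hc.1 (by omega)

lemma accept_normalized {α : Type} (F : FDFA α) (x y : List α)
    (h : F.leading.eval (x ++ y) = F.leading.eval x) :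
    F.Accept x y ↔ F.progAccept (F.leading.eval x) y := by
  unfold FDFA.Accept DetAuto.normalize
  rw [normI_eq_zero _ _ _ h, normJ_eq_one _ _ _ h]
  simp [wpow]

lemma union_foldl {α : Type} (F G : FDFA α)
    (q : F.leading.State × G.leading.State)
    (p : F.pState q.1 × G.pState q.2) (y : List α) :
    y.foldl ((F.union G).pStep q) p =
      (y.foldl (F.pStep q.1) p.1, y.foldl (G.pStep q.2) p.2) := by
  induction y generalizing p with
  | nil => rfl
  | cons a y ih =>
    show y.foldl ((F.union G).pStep q) ((F.union G).pStep q p a) = _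
    exact ih _

/-- For saturated FDFAs `F₁, F₂`, the product FDFA `H'` with accepting
sets `(F₁ × A₂) ∪ (A₁ × F₂)` recognizes `L(F₁) ∪ L(F₂)`, and `H'` is saturated. -/
theorem fdfa_union_correct {α : Type} [Inhabited α] (F₁ F₂ : FDFA α)
    (h₁ : F₁.Saturated) (h₂ : F₂.Saturated) :
    (∀ u v : List α, v ≠ [] →
      ((F₁.union F₂).Accept u v ↔ F₁.Accept u v ∨ F₂.Accept u v)) ∧
    (F₁.union F₂).Saturated := by
  have key : ∀ u v : List α, v ≠ [] →
      ((F₁.union F₂).Accept u v ↔ F₁.Accept u v ∨ F₂.Accept u v) := by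
    intro u v hv
    have hV : 0 < v.length := List.length_pos_iff.mpr hv
    set A := F₁.leading.prod F₂.leading with hAdef
    obtain ⟨hj1, hspec⟩ := Nat.find_spec (A.normI_spec u v)
    set i := A.normI u v
    set j := A.normJ u v
    set x := u ++ wpow v i with hx
    set y := wpow v j with hy
    have hy_ne : y ≠ [] := by
      have : 0 < y.length := by rw [hy, wpow_length]; positivity
      exact List.ne_nil_of_length_pos this
    have hxy : x ++ y = u ++ wpow v (i + j) := by
      rw [hx, hy, wpow_add, List.append_assoc]
    have heval : A.eval (x ++ y) = A.eval x := by
      rw [hxy]; exact hspec.symm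
    have heval1 : F₁.leading.eval (x ++ y) = F₁.leading.eval x := by
      have h1 := prod_eval F₁.leading F₂.leading (x ++ y)
      have h2 := prod_eval F₁.leading F₂.leading x
      rw [h1, h2] at heval
      exact congrArg Prod.fst heval
    have heval2 : F₂.leading.eval (x ++ y) = F₂.leading.eval x := by
      have h1 := prod_eval F₁.leading F₂.leading (x ++ y)
      have h2 := prod_eval F₁.leading F₂.leading x
      rw [h1, h2] at heval
      exact congrArg Prod.snd heval
    have hup : upWord x y = upWord u v := upWord_norm u v hv i j hj1
    have hsplit : (F₁.union F₂).Accept u v ↔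
        (F₁.progAccept (F₁.leading.eval x) y ∨ F₂.progAccept (F₂.leading.eval x) y) := by
      show (F₁.union F₂).progAccept (A.eval ((A.normalize u v).1)) ((A.normalize u v).2) ↔ _
      have hnorm : A.normalize u v = (x, y) := rfl
      rw [hnorm]
      unfold FDFA.progAccept
      rw [prod_eval]
      constructor
      · intro h
        exact (congrArg (fun p => p ∈ (F₁.union F₂).pAcc (F₁.leading.eval x, F₂.leading.eval x))
          (union_foldl F₁ F₂ (F₁.leading.eval x, F₂.leading.eval x)
            ((F₁.union F₂).pInit (F₁.leading.eval x, F₂.leading.eval x)) y)).mp h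
      · intro h
        exact (congrArg (fun p => p ∈ (F₁.union F₂).pAcc (F₁.leading.eval x, F₂.leading.eval x))
          (union_foldl F₁ F₂ (F₁.leading.eval x, F₂.leading.eval x)
            ((F₁.union F₂).pInit (F₁.leading.eval x, F₂.leading.eval x)) y)).mpr h
    rw [hsplit, ← accept_normalized F₁ x y heval1, ← accept_normalized F₂ x y heval2,
      h₁ x y u v hy_ne hv hup, h₂ x y u v hy_ne hv hup]
  refine ⟨key, ?_⟩
  intro u v u' v' hv hv' hw
  rw [key u v hv, key u' v' hv', h₁ u v u' v' hv hv' hw, h₂ u v u' v' hv hv' hw]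
end

section
/- Every deterministic parity automaton recognizing the language L_n (over alphabet {1,…,n}, consisting of infinite words in which every letter i is followed by some j ≤ i+1 and the number of letters occurring infinitely often is odd) must have at least 2^(n−1) states. -/
open Classical

/-- The letter `a : Fin n` represents the number `a.val + 1 ∈ {1,…,n}`. A word is in
`LnSet n` iff every letter `i` is followed by a letter `j ≤ i + 1` and the number of
letters occurring infinitely often is odd. -/
def LnSet (n : ℕ) : Set (ℕ → Fin n) :=
  {w | (∀ p : ℕ, (w (p + 1)).val ≤ (w p).val + 1) ∧
    Odd (Set.ncard {a : Fin n | {p : ℕ | w p = a}.Infinite})}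

/-- Parity acceptance: the minimal color visited infinitely often along the run is odd. -/
def parityAccepts {α : Type} (A : DetAuto α) (κ : A.State → ℕ) (w : ℕ → α) : Prop :=
  Odd (sInf {c | {n | κ (A.runSeq w n) = c}.Infinite})

namespace LnLB

/-- `b` may follow `a` in a valid word. -/
def Rel {n : ℕ} (a b : Fin n) : Prop := b.val ≤ a.val + 1

variable {n : ℕ} (D : DetAuto (Fin n))

lemma chainCons_iff {a b : Fin n} {l : List (Fin n)} :
    List.Chain Rel a (b :: l) ↔ Rel a b ∧ List.Chain Rel b l := List.isChain_cons_cons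

/-- Extended states: automaton state together with the last letter read. -/
abbrev E (D : DetAuto (Fin n)) := D.State × Fin n

def estep1 (x : E D) (c : Fin n) : E D := (D.step x.1 c, c)

def esteps (x : E D) (l : List (Fin n)) : E D := l.foldl (estep1 D) x

lemma esteps_nil (x : E D) : esteps D x [] = x := rfl

lemma esteps_append (x : E D) (l1 l2 : List (Fin n)) :
    esteps D x (l1 ++ l2) = esteps D (esteps D x l1) l2 := List.foldl_append

lemma esteps_eq (x : E D) (l : List (Fin n)) :
    esteps D x l = (D.run x.1 l, l.getLastD x.2) := by
  induction l generalizing x with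
  | nil => rfl
  | cons c l ih =>
      show esteps D (estep1 D x c) l = _
      rw [ih, List.getLastD_cons]
      rfl

lemma esteps_fst (x : E D) (l : List (Fin n)) : (esteps D x l).1 = D.run x.1 l := by
  rw [esteps_eq]

lemma esteps_fst_eq (x y : E D) (l : List (Fin n)) (h : x.1 = y.1) :
    (esteps D x l).1 = (esteps D y l).1 := by
  rw [esteps_fst, esteps_fst, h]

lemma esteps_snd (x : E D) (l : List (Fin n)) (h : l ≠ []) :
    (esteps D x l).2 = l.getLast h := by
  rw [esteps_eq, List.getLastD_eq_getLast?, List.getLast?_eq_getLast h, Option.getD_some]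

/-- words over the interval `[lo,hi]`, valid when read after last letter `m`. -/
def okFrom (lo hi m : Fin n) (l : List (Fin n)) : Prop :=
  (∀ c ∈ l, lo ≤ c ∧ c ≤ hi) ∧ List.Chain Rel m l

lemma chain_comp {m : Fin n} {l1 l2 : List (Fin n)}
    (h1 : List.Chain Rel m l1) (h2 : List.Chain Rel (l1.getLastD m) l2) :
    List.Chain Rel m (l1 ++ l2) := by
  induction l1 generalizing m with
  | nil => exact h2
  | cons a l1 ih =>
      rw [chainCons_iff] at h1
      rw [List.cons_append, chainCons_iff]
      exact ⟨h1.1, ih h1.2 (by rwa [List.getLastD_cons] at h2)⟩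

lemma chain_take {m : Fin n} {l : List (Fin n)} (h : List.Chain Rel m l) (t : ℕ) :
    List.Chain Rel m (l.take t) := by
  induction l generalizing m t with
  | nil => simpa using List.Chain.nil
  | cons a l ih =>
      cases t with
      | zero => exact List.Chain.nil
      | succ t =>
          rw [chainCons_iff] at h
          rw [List.take_succ_cons, chainCons_iff]
          exact ⟨h.1, ih h.2 t⟩

lemma chain_head {m m' : Fin n} {l : List (Fin n)} (h : List.Chain Rel m l)
    (h' : ∀ c, l.head? = some c → Rel m' c) : List.Chain Rel m' l := by
  cases l with
  | nil => exact List.Chain.nil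
  | cons a l =>
      rw [chainCons_iff] at h ⊢
      exact ⟨h' a rfl, h.2⟩

lemma okFrom_comp {lo hi m : Fin n} {l1 l2 : List (Fin n)}
    (h1 : okFrom lo hi m l1) (h2 : okFrom lo hi (l1.getLastD m) l2) :
    okFrom lo hi m (l1 ++ l2) := by
  refine ⟨?_, chain_comp h1.2 h2.2⟩
  intro c hc
  rcases List.mem_append.1 hc with h | h
  · exact h1.1 c h
  · exact h2.1 c h

lemma okFrom_take {lo hi m : Fin n} {l : List (Fin n)} (h : okFrom lo hi m l) (t : ℕ) :
    okFrom lo hi m (l.take t) :=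
  ⟨fun c hc => h.1 c (List.mem_of_mem_take hc), chain_take h.2 t⟩

lemma okFrom_mono {lo hi lo' hi' m : Fin n} {l : List (Fin n)} (h : okFrom lo hi m l)
    (hlo : lo' ≤ lo) (hhi : hi ≤ hi') : okFrom lo' hi' m l :=
  ⟨fun c hc => ⟨le_trans hlo (h.1 c hc).1, le_trans (h.1 c hc).2 hhi⟩, h.2⟩

/-- Reachability between extended states via valid `[lo,hi]`-words. -/
def EReach (lo hi : Fin n) (x y : E D) : Prop :=
  ∃ l, okFrom lo hi x.2 l ∧ esteps D x l = y

lemma EReach.refl (lo hi : Fin n) (x : E D) : EReach D lo hi x x :=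
  ⟨[], ⟨by simp, List.Chain.nil⟩, rfl⟩

lemma EReach.trans {lo hi : Fin n} {x y z : E D} (h1 : EReach D lo hi x y)
    (h2 : EReach D lo hi y z) : EReach D lo hi x z := by
  obtain ⟨l1, hok1, hs1⟩ := h1
  obtain ⟨l2, hok2, hs2⟩ := h2
  refine ⟨l1 ++ l2, okFrom_comp hok1 ?_, by rw [esteps_append, hs1, hs2]⟩
  have : l1.getLastD x.2 = y.2 := by rw [← hs1, esteps_eq]
  rwa [this]

/-- The closure of `x` under `[lo,hi]`-words. -/
def Clo (lo hi : Fin n) (x : E D) : Set (E D) := {y | EReach D lo hi x y}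

lemma self_mem_Clo (lo hi : Fin n) (x : E D) : x ∈ Clo D lo hi x := EReach.refl D lo hi x

lemma Clo_subset {lo hi : Fin n} {x y : E D} (h : y ∈ Clo D lo hi x) :
    Clo D lo hi y ⊆ Clo D lo hi x := fun _ hz => EReach.trans D h hz

/-- Reachability from the initial state via a valid nonempty word. -/
def Rinit (x : E D) : Prop :=
  ∃ u : List (Fin n), u ≠ [] ∧ List.Chain' Rel u ∧ D.eval u = x.1 ∧ u.getLast? = some x.2

lemma chain_head_rel {m : Fin n} {l : List (Fin n)} (h : List.Chain Rel m l)
    {c : Fin n} (hc : l.head? = some c) : Rel m c := by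
  cases l with
  | nil => simp at hc
  | cons a l =>
      rw [List.head?_cons] at hc
      cases hc
      exact (List.chain_cons.1 h).1

lemma Rinit_extend {x y : E D} {lo hi : Fin n} (hx : Rinit D x) (h : EReach D lo hi x y) :
    Rinit D y := by
  obtain ⟨u, hne, hch, hev, hlast⟩ := hx
  obtain ⟨l, ⟨_, hchl⟩, hs⟩ := h
  rcases eq_or_ne l [] with rfl | hlne
  · rw [esteps_nil] at hs
    exact hs ▸ ⟨u, hne, hch, hev, hlast⟩
  refine ⟨u ++ l, by simp [hne], ?_, ?_, ?_⟩
  · rw [show List.Chain' Rel (u ++ l) ↔ _ from List.isChain_append]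
    refine ⟨hch, ?_, ?_⟩
    · cases l with
      | nil => exact List.IsChain.nil
      | cons a l' => exact (List.chain_cons.1 hchl).2
    · intro a ha b hb
      have ha' : a = x.2 := by rw [hlast] at ha; exact (Option.some.inj ha).symm
      subst ha'
      exact chain_head_rel hchl hb
  · rw [← hs, esteps_fst]
    show List.foldl D.step D.init (u ++ l) = _
    rw [List.foldl_append]
    show D.run (D.eval u) l = D.run x.1 l
    rw [hev]
  · rw [← hs, List.getLast?_append_of_ne_nil u hlne, esteps_snd D x l hlne,
      List.getLast?_eq_getLast hlne]

end LnLB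
namespace LnLB

variable {n : ℕ} (D : DetAuto (Fin n))

/-- Ascending word `a, a+1, …, a+k-1` as letters of `Fin n`. -/
def ascL : (a k : ℕ) → (a + k ≤ n) → List (Fin n)
  | _, 0, _ => []
  | a, k+1, h => ⟨a, by omega⟩ :: ascL (a+1) k (by omega)

lemma ascL_mem {a k : ℕ} {h : a + k ≤ n} {c : Fin n} (hc : c ∈ ascL a k h) :
    a ≤ c.val ∧ c.val < a + k := by
  induction k generalizing a with
  | zero => simp [ascL] at hc
  | succ k ih =>
      rcases List.mem_cons.1 hc with rfl | hc'
      · exact ⟨le_refl a, by show a < a + (k+1); omega⟩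
      · have := ih hc'
        omega

lemma ascL_mem_of {a k : ℕ} {h : a + k ≤ n} {c : Fin n} (h1 : a ≤ c.val)
    (h2 : c.val < a + k) : c ∈ ascL a k h := by
  induction k generalizing a with
  | zero => omega
  | succ k ih =>
      rcases eq_or_lt_of_le h1 with heq | hlt
      · exact List.mem_cons.2 (Or.inl (Fin.ext heq.symm))
      · exact List.mem_cons.2 (Or.inr (ih hlt (by omega)))

lemma ascL_head? {a k : ℕ} (h : a + (k+1) ≤ n) :
    (ascL a (k+1) h).head? = some ⟨a, by omega⟩ := rfl

lemma ascL_chain {a k : ℕ} (h : a + k ≤ n) (m : Fin n) (hm : a ≤ m.val + 1) :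
    List.Chain Rel m (ascL a k h) := by
  induction k generalizing a m with
  | zero => exact List.Chain.nil
  | succ k ih =>
      exact List.Chain.cons hm (ih _ _ (by simp))

lemma ascL_ne_nil {a k : ℕ} (h : a + k ≤ n) (hk : k ≠ 0) : ascL a k h ≠ [] := by
  cases k with
  | zero => omega
  | succ k => simp [ascL]

lemma ascL_getLastD {a k : ℕ} (h : a + k ≤ n) (hk : k ≠ 0) (m : Fin n) :
    ((ascL a k h).getLastD m).val = a + k - 1 := by
  induction k generalizing a m with
  | zero => omega
  | succ k ih =>
      rw [ascL, List.getLastD_cons]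
      cases k with
      | zero => simp [ascL]
      | succ k' =>
          rw [ih _ (by omega)]
          omega

/-- letters of members of a closure. -/
lemma Clo_letter {lo hi : Fin n} {x y : E D} (h : y ∈ Clo D lo hi x) :
    y.2 = x.2 ∨ (lo ≤ y.2 ∧ y.2 ≤ hi) := by
  obtain ⟨l, hok, hs⟩ := h
  rcases eq_or_ne l [] with rfl | hlne
  · left; rw [← hs]; rfl
  · right
    have := esteps_snd D x l hlne
    rw [hs] at this
    exact this ▸ hok.1 _ (List.getLast_mem hlne)

lemma loop_getLastD {x : E D} {l : List (Fin n)} (hs : esteps D x l = x) :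
    l.getLastD x.2 = x.2 := by
  have := esteps_eq D x l
  rw [hs] at this
  exact (congrArg Prod.snd this).symm

/-- Existence of a bottom strongly-connected closure. -/
lemma exists_bottom (lo hi : Fin n) (x : E D) (hx2 : lo ≤ x.2 ∧ x.2 ≤ hi) :
    ∃ x₀ ∈ Clo D lo hi x, (lo ≤ x₀.2 ∧ x₀.2 ≤ hi) ∧
      (∀ y ∈ Clo D lo hi x₀, Clo D lo hi y = Clo D lo hi x₀) := by
  classical
  set S : Set ℕ := {k | ∃ y ∈ Clo D lo hi x, (Clo D lo hi y).ncard = k} with hS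
  have hSne : S.Nonempty := ⟨_, x, self_mem_Clo D lo hi x, rfl⟩
  obtain ⟨x₀, hx₀mem, hx₀card⟩ := Nat.sInf_mem hSne
  refine ⟨x₀, hx₀mem, ?_, ?_⟩
  · rcases Clo_letter D hx₀mem with h | h
    · rw [h]; exact hx2
    · exact h
  · intro y hy
    have hsub : Clo D lo hi y ⊆ Clo D lo hi x₀ := Clo_subset D hy
    have hyx : y ∈ Clo D lo hi x := Clo_subset D hx₀mem hy
    have hmem : (Clo D lo hi y).ncard ∈ S := ⟨y, hyx, rfl⟩
    have hle : sInf S ≤ (Clo D lo hi y).ncard := Nat.sInf_le hmem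
    rw [← hx₀card] at hle
    exact Set.eq_of_subset_of_ncard_le hsub hle (Set.toFinite _)

/-- The tour lemma: from any point of a bottom SCC there is a loop that starts with
letter `lo`, visits exactly the SCC, and reads exactly the letters in `[lo,hi]`. -/
lemma tour (lo hi : Fin n) (hlh : lo ≤ hi) (x₀ : E D) (hx₀2 : lo ≤ x₀.2 ∧ x₀.2 ≤ hi)
    (hmin : ∀ y ∈ Clo D lo hi x₀, Clo D lo hi y = Clo D lo hi x₀)
    (x : E D) (hx : x ∈ Clo D lo hi x₀) :
    ∃ l, l ≠ [] ∧ okFrom lo hi x.2 l ∧ esteps D x l = x ∧ l.head? = some lo ∧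
      (∀ c : Fin n, c ∈ l ↔ (lo ≤ c ∧ c ≤ hi)) ∧
      ({p | ∃ t ≤ l.length, esteps D x (l.take t) = p} = Clo D lo hi x₀) := by
  classical
  have hlet : ∀ y ∈ Clo D lo hi x₀, lo ≤ y.2 ∧ y.2 ≤ hi := by
    intro y hy
    rcases Clo_letter D hy with h | h
    · rw [h]; exact hx₀2
    · exact h
  have hconn : ∀ y ∈ Clo D lo hi x₀, ∀ z ∈ Clo D lo hi x₀, EReach D lo hi y z := by
    intro y hy z hz
    have := hmin y hy
    rw [← this] at hz
    exact hz
  have hxB := hlet x hx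
  have hkle : lo.val + (hi.val + 1 - lo.val) ≤ n := by omega
  set asc : List (Fin n) := ascL lo.val (hi.val + 1 - lo.val) hkle with hasc
  have hascne : asc ≠ [] := ascL_ne_nil _ (by
    have := Fin.le_def.1 hlh
    omega)
  have hascok : okFrom lo hi x.2 asc := by
    constructor
    · intro c hc
      have := ascL_mem hc
      exact ⟨Fin.le_def.2 this.1, Fin.le_def.2 (by omega)⟩
    · exact ascL_chain _ _ (by have := Fin.le_def.1 hxB.1; omega)
  have hascall : ∀ c : Fin n, lo ≤ c → c ≤ hi → c ∈ asc := by
    intro c h1 h2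
    exact ascL_mem_of (Fin.le_def.1 h1) (by have := Fin.le_def.1 h2; omega)
  set y1 : E D := esteps D x asc with hy1
  have hy1B : y1 ∈ Clo D lo hi x₀ := by
    rw [← hmin x hx]
    exact ⟨asc, hascok, rfl⟩
  obtain ⟨lb, hlbok, hlbs⟩ := hconn y1 hy1B x hx
  have key : ∀ ts : List (E D), (∀ y ∈ ts, y ∈ Clo D lo hi x₀) →
      ∃ l, okFrom lo hi x.2 l ∧ esteps D x l = x ∧
        ∀ y ∈ ts, ∃ t ≤ l.length, esteps D x (l.take t) = y := by
    intro ts hts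
    induction ts with
    | nil => exact ⟨[], ⟨by simp, List.Chain.nil⟩, rfl, by simp⟩
    | cons y ts ih =>
        obtain ⟨l0, hl0ok, hl0s, hl0vis⟩ := ih (fun z hz => hts z (List.mem_cons_of_mem _ hz))
        obtain ⟨l1, hl1ok, hl1s⟩ := hconn x hx y (hts y (List.mem_cons_self))
        obtain ⟨l2, hl2ok, hl2s⟩ := hconn y (hts y (List.mem_cons_self)) x hx
        have h1 : okFrom lo hi (l1.getLastD x.2) l2 := by
          have : l1.getLastD x.2 = y.2 := by rw [← hl1s, esteps_eq]
          rw [this]; exact hl2ok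
        have h2 : okFrom lo hi (l0.getLastD x.2) (l1 ++ l2) := by
          rw [loop_getLastD D hl0s]
          exact okFrom_comp hl1ok h1
        refine ⟨l0 ++ (l1 ++ l2), okFrom_comp hl0ok h2, ?_, ?_⟩
        · rw [esteps_append, hl0s, esteps_append, hl1s, hl2s]
        · intro z hz
          rcases List.mem_cons.1 hz with rfl | hz'
          · refine ⟨l0.length + l1.length, by simp, ?_⟩
            rw [← List.append_assoc, ← List.length_append, List.take_left,
              esteps_append, hl0s, hl1s]
          · obtain ⟨t, ht, hts'⟩ := hl0vis z hz'
            refine ⟨t, by simp; omega, ?_⟩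
            rwa [List.take_append_of_le_length ht]
  obtain ⟨l0, hl0ok, hl0s, hl0vis⟩ := key (Set.toFinite (Clo D lo hi x₀)).toFinset.toList
    (fun y hy => ((Set.toFinite _).mem_toFinset).1 (Finset.mem_toList.1 hy))
  have hasclast : asc.getLastD x.2 = y1.2 := by rw [hy1, esteps_eq]
  have hlblast : lb.getLastD y1.2 = x.2 := by rw [← hlbs, esteps_eq]
  have hok1 : okFrom lo hi (lb.getLastD y1.2) l0 := by rw [hlblast]; exact hl0ok
  have hok2 : okFrom lo hi (asc.getLastD x.2) (lb ++ l0) := by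
    rw [hasclast]; exact okFrom_comp hlbok hok1
  have hokAll : okFrom lo hi x.2 (asc ++ (lb ++ l0)) := okFrom_comp hascok hok2
  refine ⟨asc ++ (lb ++ l0), by simp [hascne], hokAll, ?_, ?_, ?_, ?_⟩
  · rw [esteps_append, esteps_append, ← hy1, hlbs, hl0s]
  · rw [List.head?_append]
    have hk : hi.val + 1 - lo.val = (hi.val - lo.val) + 1 := by
      have := Fin.le_def.1 hlh; omega
    have : asc.head? = some lo := by
      rw [hasc]
      simp only [hk]
      rw [ascL_head?]
    rw [this]
    rfl
  · intro c
    constructor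
    · intro hc
      exact hokAll.1 c hc
    · intro ⟨h1, h2⟩
      exact List.mem_append.2 (Or.inl (hascall c h1 h2))
  · apply Set.Subset.antisymm
    · rintro p ⟨t, ht, rfl⟩
      rw [← hmin x hx]
      exact ⟨(asc ++ (lb ++ l0)).take t, okFrom_take hokAll t, rfl⟩
    · intro z hz
      obtain ⟨t, ht, hts'⟩ := hl0vis z (Finset.mem_toList.2 ((Set.toFinite _).mem_toFinset.2 hz))
      refine ⟨(asc ++ lb).length + t, by simp; omega, ?_⟩
      rw [show asc ++ (lb ++ l0) = (asc ++ lb) ++ l0 by simp, List.take_length_add_append,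
        esteps_append]
      have : esteps D x (asc ++ lb) = x := by rw [esteps_append, ← hy1, hlbs]
      rw [this, hts']

end LnLB
namespace LnLB

variable {n : ℕ} [NeZero n] (D : DetAuto (Fin n))

/-- The prefix of length `k` of an infinite word, as a list. -/
def pref (w : ℕ → Fin n) (k : ℕ) : List (Fin n) := (List.range k).map w

lemma runSeq_eq_eval_pref (w : ℕ → Fin n) (k : ℕ) :
    D.runSeq w k = D.eval (pref w k) := by
  induction k with
  | zero => rfl
  | succ k ih =>
      show D.step (D.runSeq w k) (w k) = _
      rw [ih]
      simp only [pref, List.range_succ, List.map_append]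
      show _ = List.foldl D.step D.init (List.map w (List.range k) ++ [w k])
      rw [List.foldl_append]
      rfl

lemma map_range_eq_of_agree (f : ℕ → Fin n) (l : List (Fin n))
    (h : ∀ i, (hi : i < l.length) → f i = l[i]) :
    (List.range l.length).map f = l := by
  apply List.ext_getElem
  · simp
  · intro i h1 h2
    rw [List.getElem_map, List.getElem_range]
    exact h i h2

lemma pref_add (w : ℕ → Fin n) (a b : ℕ) :
    pref w (a + b) = pref w a ++ (List.range b).map (fun i => w (a + i)) := by
  rw [pref, List.range_add, List.map_append, List.map_map]
  rfl

lemma wpow_length (v : List (Fin n)) (m : ℕ) : (wpow v m).length = m * v.length := by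
  induction m with
  | zero => simp [wpow]
  | succ m ih => simp [wpow, ih, Nat.succ_mul]

lemma upWord_lt (u v : List (Fin n)) {p : ℕ} (hp : p < u.length) :
    upWord u v p = u.getD p default := if_pos hp

lemma upWord_ge (u v : List (Fin n)) {p : ℕ} (hp : ¬ p < u.length) :
    upWord u v p = v.getD ((p - u.length) % v.length) default := if_neg hp

lemma upWord_at (u v : List (Fin n)) {m t : ℕ} (ht : t < v.length) :
    upWord u v (u.length + (m * v.length + t)) = v.getD t default := by
  rw [upWord_ge u v (by omega)]
  congr 1
  rw [Nat.add_sub_cancel_left, Nat.mul_comm, Nat.mul_add_mod, Nat.mod_eq_of_lt ht]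

lemma pref_upWord_aux (u v : List (Fin n)) (m : ℕ) :
    pref (upWord u v) (u.length + m * v.length) = u ++ wpow v m := by
  induction m with
  | zero =>
      have h0 : u.length + 0 * v.length = u.length := by ring
      rw [h0]
      show pref (upWord u v) u.length = u ++ wpow v 0
      rw [show wpow v 0 = [] from rfl, List.append_nil]
      exact map_range_eq_of_agree _ u (fun i hi => by
        rw [upWord_lt u v hi, List.getD_eq_getElem u default hi])
  | succ m ih =>
      have h1 : u.length + (m+1) * v.length = (u.length + m * v.length) + v.length := by
        ring
      rw [h1, pref_add, ih]
      show _ = u ++ (wpow v m ++ v)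
      rw [← List.append_assoc]
      congr 1
      exact map_range_eq_of_agree _ v (fun i hi => by
        rw [Nat.add_assoc, upWord_at u v hi, List.getD_eq_getElem v default hi])

lemma pref_upWord (u v : List (Fin n)) (m t : ℕ) (ht : t ≤ v.length) :
    pref (upWord u v) (u.length + m * v.length + t) = (u ++ wpow v m) ++ v.take t := by
  rw [pref_add, pref_upWord_aux]
  congr 1
  have hlen : (v.take t).length = t := by
    rw [List.length_take]
    omega
  conv_lhs => rw [← hlen]
  exact map_range_eq_of_agree _ (v.take t) (fun i hi => by
    rw [hlen] at hi
    rw [List.getElem_take]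
    rw [Nat.add_assoc, upWord_at u v (by omega), List.getD_eq_getElem v default (by omega)])

end LnLB
namespace LnLB

variable {n : ℕ} [NeZero n] (D : DetAuto (Fin n))

lemma mod_succ (t L : ℕ) (hL : 0 < L) :
    (t+1) % L = if t % L + 1 = L then 0 else t % L + 1 := by
  have h1 : t = L * (t / L) + t % L := (Nat.div_add_mod t L).symm
  have h2 : t % L < L := Nat.mod_lt _ hL
  by_cases hc : t % L + 1 = L
  · rw [if_pos hc]
    have h3 : t + 1 = L * (t / L + 1) := by
      rw [Nat.mul_add, Nat.mul_one]
      omega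
    rw [h3, Nat.mul_mod_right]
  · rw [if_neg hc]
    have h3 : t + 1 = L * (t / L) + (t % L + 1) := by omega
    rw [h3, Nat.mul_add_mod, Nat.mod_eq_of_lt (by omega)]

lemma chain'_rel_getD {u : List (Fin n)} (h : List.Chain' Rel u) {i : ℕ}
    (hi : i + 1 < u.length) (d : Fin n) : Rel (u.getD i d) (u.getD (i+1) d) := by
  rw [List.getD_eq_getElem u d (by omega), List.getD_eq_getElem u d hi]
  have := List.isChain_iff_getElem.1 h i (by omega)
  simpa using this

lemma chain_rel_getD0 {m : Fin n} {l : List (Fin n)} (h : List.Chain Rel m l)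
    (hl : l ≠ []) (d : Fin n) : Rel m (l.getD 0 d) := by
  cases l with
  | nil => exact absurd rfl hl
  | cons c l' => exact (List.chain_cons.1 h).1

lemma chain'_of_chain {m : Fin n} {l : List (Fin n)} (h : List.Chain Rel m l) :
    List.Chain' Rel l := by
  cases l with
  | nil => exact List.IsChain.nil
  | cons c l' => exact (List.chain_cons.1 h).2

lemma getD_last_eq {l : List (Fin n)} (hl : l ≠ []) (d m2 : Fin n)
    (hwrap : l.getLastD m2 = m2) : l.getD (l.length - 1) d = m2 := by
  rw [List.getD_eq_getElem l d (by
    have := List.length_pos_iff.2 hl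
    omega)]
  rw [← List.getLast_eq_getElem hl]
  rw [List.getLastD_eq_getLast?, List.getLast?_eq_getLast hl, Option.getD_some] at hwrap
  exact hwrap

lemma valid_upWord (u l : List (Fin n)) (hu : u ≠ []) (hl : l ≠ []) (m2 : Fin n)
    (hchu : List.Chain' Rel u) (hlast : u.getLast? = some m2)
    (hch : List.Chain Rel m2 l) (hwrap : l.getLastD m2 = m2) :
    ∀ p : ℕ, (upWord u l (p+1)).val ≤ (upWord u l p).val + 1 := by
  intro p
  have hL : 0 < l.length := List.length_pos_iff.2 hl
  have hU : 0 < u.length := List.length_pos_iff.2 hu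
  have hlast' : u.getD (u.length - 1) default = m2 := by
    rw [List.getD_eq_getElem u default (by omega), ← List.getLast_eq_getElem hu]
    rw [List.getLast?_eq_getLast hu] at hlast
    exact Option.some.inj hlast
  rcases lt_trichotomy (p+1) u.length with h | h | h
  · rw [upWord_lt u l h, upWord_lt u l (by omega)]
    exact chain'_rel_getD hchu h default
  · have hp : p = u.length - 1 := by omega
    rw [upWord_ge u l (show ¬ p + 1 < u.length by omega),
      upWord_lt u l (show p < u.length by omega)]
    have h0 : (p + 1 - u.length) % l.length = 0 := by
      rw [show p + 1 - u.length = 0 by omega]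
      exact Nat.zero_mod _
    rw [h0, hp, hlast']
    exact chain_rel_getD0 hch hl default
  · have hp1 : ¬ p + 1 < u.length := by omega
    have hp2 : ¬ p < u.length := by omega
    rw [upWord_ge u l hp1, upWord_ge u l hp2]
    set t := p - u.length with hdeft
    have ht1 : p + 1 - u.length = t + 1 := by omega
    rw [ht1, mod_succ t l.length hL]
    by_cases hc : t % l.length + 1 = l.length
    · rw [if_pos hc]
      have : l.getD (t % l.length) default = m2 := by
        rw [show t % l.length = l.length - 1 by omega]
        exact getD_last_eq hl default m2 hwrap
      rw [this]
      exact chain_rel_getD0 hch hl default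
    · rw [if_neg hc]
      have hm : t % l.length < l.length := Nat.mod_lt _ hL
      exact chain'_rel_getD (chain'_of_chain hch) (by omega) default

lemma state_at (u : List (Fin n)) (x : E D) (hev : D.eval u = x.1)
    (l : List (Fin n)) (hloop : D.run x.1 l = x.1) (m t : ℕ) (ht : t ≤ l.length) :
    D.runSeq (upWord u l) (u.length + m * l.length + t) = D.run x.1 (l.take t) := by
  rw [runSeq_eq_eval_pref, pref_upWord u l m t ht]
  show List.foldl D.step D.init ((u ++ wpow l m) ++ l.take t) = _
  rw [List.foldl_append, List.foldl_append]
  have hw : ∀ m', List.foldl D.step x.1 (wpow l m') = x.1 := by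
    intro m'
    induction m' with
    | zero => rfl
    | succ m' ih =>
        show List.foldl D.step x.1 (wpow l m' ++ l) = x.1
        rw [List.foldl_append, ih]
        exact hloop
  show List.foldl D.step (List.foldl D.step (D.eval u) (wpow l m)) (l.take t) = _
  rw [hev, hw]
  rfl

lemma colors_eq (κ : D.State → ℕ) (u : List (Fin n)) (x : E D) (hev : D.eval u = x.1)
    (l : List (Fin n)) (hl : l ≠ []) (hloop : D.run x.1 l = x.1) :
    {c : ℕ | {k : ℕ | κ (D.runSeq (upWord u l) k) = c}.Infinite}
      = κ '' {p | ∃ t ≤ l.length, D.run x.1 (l.take t) = p} := by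
  have hL : 0 < l.length := List.length_pos_iff.2 hl
  ext c
  constructor
  · intro hc
    obtain ⟨k, hk, hk2⟩ := Set.Infinite.exists_gt hc u.length
    have hk3 : k = u.length + (k - u.length) / l.length * l.length + (k - u.length) % l.length := by
      have h := Nat.div_add_mod (k - u.length) l.length
      have hcm : (k - u.length) / l.length * l.length
          = l.length * ((k - u.length) / l.length) := Nat.mul_comm _ _
      omega
    refine ⟨D.run x.1 (l.take ((k - u.length) % l.length)),
      ⟨(k - u.length) % l.length, le_of_lt (Nat.mod_lt _ hL), rfl⟩, ?_⟩
    have hst := state_at D u x hev l hloop ((k - u.length) / l.length)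
      ((k - u.length) % l.length) (le_of_lt (Nat.mod_lt _ hL))
    rw [← hst, ← hk3]
    exact hk
  · rintro ⟨p, ⟨t, ht, rfl⟩, rfl⟩
    obtain ⟨t', ht', hsame⟩ : ∃ t' < l.length, D.run x.1 (l.take t') = D.run x.1 (l.take t) := by
      rcases eq_or_lt_of_le ht with heq | hlt
      · refine ⟨0, hL, ?_⟩
        rw [heq, List.take_length, List.take_zero, hloop]
        rfl
      · exact ⟨t, hlt, rfl⟩
    apply Set.infinite_of_injective_forall_mem
      (f := fun m : ℕ => u.length + m * l.length + t')
    · intro a b hab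
      simp only at hab
      have : a * l.length = b * l.length := by omega
      exact Nat.eq_of_mul_eq_mul_right hL this
    · intro m
      show κ (D.runSeq (upWord u l) (u.length + m * l.length + t')) = _
      rw [state_at D u x hev l hloop m t' (le_of_lt ht'), hsame]
  
lemma letters_eq (u l : List (Fin n)) (hl : l ≠ []) :
    {a : Fin n | {p : ℕ | upWord u l p = a}.Infinite} = {a : Fin n | a ∈ l} := by
  have hL : 0 < l.length := List.length_pos_iff.2 hl
  ext a
  simp only [Set.mem_setOf_eq]
  constructor
  · intro ha
    obtain ⟨k, hk, hk2⟩ := Set.Infinite.exists_gt ha u.length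
    simp only [Set.mem_setOf_eq] at hk
    rw [upWord_ge u l (by omega)] at hk
    rw [← hk, List.getD_eq_getElem l default (Nat.mod_lt _ hL)]
    exact List.getElem_mem _
  · intro ha
    obtain ⟨t, ht, rfl⟩ := List.mem_iff_getElem.1 ha
    apply Set.infinite_of_injective_forall_mem
      (f := fun m : ℕ => u.length + (m * l.length + t))
    · intro a b hab
      simp only at hab
      have : a * l.length = b * l.length := by omega
      exact Nat.eq_of_mul_eq_mul_right hL this
    · intro m
      show upWord u l (u.length + (m * l.length + t)) = l[t]
      rw [upWord_at u l ht, List.getD_eq_getElem l default ht]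

/-- The bridge lemma: for any loop at an initially-reachable extended state, the
parity of the minimal color on the loop agrees with the parity of the number of
distinct letters on the loop. -/
lemma bridge (κ : D.State → ℕ)
    (hrec : ∀ w : ℕ → Fin n, parityAccepts D κ w ↔ w ∈ LnSet n)
    (x : E D) (hx : Rinit D x) (l : List (Fin n)) (hl : l ≠ [])
    (hch : List.Chain Rel x.2 l) (hloop : esteps D x l = x) :
    (Odd (sInf (κ '' {p | ∃ t ≤ l.length, D.run x.1 (l.take t) = p})) ↔
      Odd ({a : Fin n | a ∈ l}.ncard)) := by
  obtain ⟨u, hune, hchu, hev, hlast⟩ := hx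
  have hloop' : D.run x.1 l = x.1 := by
    have := esteps_fst D x l
    rw [hloop] at this
    exact this.symm
  have hwrap : l.getLastD x.2 = x.2 := loop_getLastD D hloop
  have hval := valid_upWord u l hune hl x.2 hchu hlast hch hwrap
  have h1 := hrec (upWord u l)
  rw [parityAccepts, colors_eq D κ u x hev l hl hloop'] at h1
  have h2 : upWord u l ∈ LnSet n ↔ Odd ({a : Fin n | a ∈ l}.ncard) := by
    constructor
    · intro hmem
      have := hmem.2
      rwa [letters_eq u l hl] at this
    · intro hodd
      refine ⟨hval, ?_⟩
      rwa [letters_eq u l hl]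
  rw [h2] at h1
  exact h1

end LnLB
namespace LnLB

variable {n : ℕ} [NeZero n] (D : DetAuto (Fin n))

lemma getLastD_eq_getLast {l : List (Fin n)} (h : l ≠ []) (d : Fin n) :
    l.getLastD d = l.getLast h := by
  rw [List.getLastD_eq_getLast?, List.getLast?_eq_getLast h, Option.getD_some]

lemma Clo_mono {lo hi lo' hi' : Fin n} (hlo : lo ≤ lo') (hhi : hi' ≤ hi) (x : E D) :
    Clo D lo' hi' x ⊆ Clo D lo hi x := by
  rintro y ⟨l, hok, hs⟩
  exact ⟨l, okFrom_mono hok hlo hhi, hs⟩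

lemma run_append (q : D.State) (l1 l2 : List (Fin n)) :
    D.run q (l1 ++ l2) = D.run (D.run q l1) l2 := List.foldl_append

lemma sInf_union_min {S T : Set ℕ} (hS : S.Nonempty) (hT : T.Nonempty) :
    sInf (S ∪ T) = min (sInf S) (sInf T) := by
  apply le_antisymm
  · apply le_min
    · exact Nat.sInf_le (Set.mem_union_left _ (Nat.sInf_mem hS))
    · exact Nat.sInf_le (Set.mem_union_right _ (Nat.sInf_mem hT))
  · rcases Nat.sInf_mem (hS.mono (Set.subset_union_left (t := T)) : (S ∪ T).Nonempty) with h | h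
    · exact le_trans (min_le_left _ _) (Nat.sInf_le h)
    · exact le_trans (min_le_right _ _) (Nat.sInf_le h)

lemma main (κ : D.State → ℕ)
    (hrec : ∀ w : ℕ → Fin n, parityAccepts D κ w ↔ w ∈ LnSet n) :
    ∀ d : ℕ, ∀ lo hi : Fin n, hi.val = lo.val + d → ∀ x₀ : E D,
      lo ≤ x₀.2 → x₀.2 ≤ hi → Rinit D x₀ →
      (∀ y ∈ Clo D lo hi x₀, Clo D lo hi y = Clo D lo hi x₀) →
      2 ^ d ≤ (Prod.fst '' Clo D lo hi x₀).ncard := by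
  intro d
  induction d with
  | zero =>
      intro lo hi hd x₀ h1 h2 h3 h4
      have : (Prod.fst '' Clo D lo hi x₀).Nonempty :=
        ⟨x₀.1, x₀, self_mem_Clo D lo hi x₀, rfl⟩
      have := (Set.ncard_pos (Set.toFinite _)).2 this
      rw [pow_zero]; exact this
  | succ d ih =>
      intro lo hi hd x₀ hb1 hb2 hRi hmin
      have hnn : hi.val < n := hi.isLt
      have hlo1 : lo.val + 1 < n := by omega
      set loL : Fin n := ⟨lo.val + 1, hlo1⟩ with hloL
      set hiR : Fin n := ⟨hi.val - 1, by omega⟩ with hhiR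
      have hloLv : loL.val = lo.val + 1 := rfl
      have hhiRv : hiR.val = hi.val - 1 := rfl
      set B : Set (E D) := Clo D lo hi x₀ with hB
      -- bounds for all members of B
      have hbnd : ∀ y ∈ B, lo ≤ y.2 ∧ y.2 ≤ hi := by
        intro y hy
        rcases Clo_letter D hy with h | h
        · rw [h]; exact ⟨hb1, hb2⟩
        · exact h
      -- left child
      set xL : E D := estep1 D x₀ loL with hxL
      have hxL2 : xL.2 = loL := rfl
      have hxLB : xL ∈ B := by
        refine ⟨[loL], ⟨?_, ?_⟩, rfl⟩
        · intro c hc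
          rcases List.mem_singleton.1 hc with rfl
          exact ⟨Fin.le_def.2 (by omega), Fin.le_def.2 (by omega)⟩
        · refine List.Chain.cons ?_ List.Chain.nil
          show loL.val ≤ x₀.2.val + 1
          have := Fin.le_def.1 hb1
          omega
      obtain ⟨yL, hyLmem, hyLb, hminL⟩ := exists_bottom D loL hi xL (by
        rw [hxL2]
        exact ⟨le_refl _, Fin.le_def.2 (by omega)⟩)
      set BL : Set (E D) := Clo D loL hi yL with hBL
      have hyLB : yL ∈ B := Clo_subset D hxLB (Clo_mono D (Fin.le_def.2 (by omega)) (le_refl _) xL hyLmem)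
      have hBLB : BL ⊆ B :=
        fun z hz => Clo_subset D hyLB (Clo_mono D (Fin.le_def.2 (by omega)) (le_refl _) yL hz)
      have hRiyL : Rinit D yL := Rinit_extend D hRi hyLB
      have hIHL : 2 ^ d ≤ (Prod.fst '' BL).ncard :=
        ih loL hi (by simp [hloL]; omega) yL hyLb.1 hyLb.2 hRiyL hminL
      -- right child
      set xR : E D := estep1 D x₀ lo with hxR
      have hxR2 : xR.2 = lo := rfl
      have hxRB : xR ∈ B := by
        refine ⟨[lo], ⟨?_, ?_⟩, rfl⟩
        · intro c hc
          rcases List.mem_singleton.1 hc with rfl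
          exact ⟨le_refl _, Fin.le_def.2 (by omega)⟩
        · refine List.Chain.cons ?_ List.Chain.nil
          show lo.val ≤ x₀.2.val + 1
          omega
      obtain ⟨yR, hyRmem, hyRb, hminR⟩ := exists_bottom D lo hiR xR (by
        rw [hxR2]
        exact ⟨le_refl _, Fin.le_def.2 (by omega)⟩)
      set BR : Set (E D) := Clo D lo hiR yR with hBR
      have hyRB : yR ∈ B := Clo_subset D hxRB (Clo_mono D (le_refl _) (Fin.le_def.2 (by omega)) xR hyRmem)
      have hBRB : BR ⊆ B :=
        fun z hz => Clo_subset D hyRB (Clo_mono D (le_refl _) (Fin.le_def.2 (by omega)) yR hz)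
      have hRiyR : Rinit D yR := Rinit_extend D hRi hyRB
      have hIHR : 2 ^ d ≤ (Prod.fst '' BR).ncard :=
        ih lo hiR (by simp [hhiR]; omega) yR hyRb.1 hyRb.2 hRiyR hminR
      -- bounds inside children
      have hbndL : ∀ y ∈ BL, loL ≤ y.2 ∧ y.2 ≤ hi := by
        intro y hy
        rcases Clo_letter D hy with h | h
        · rw [h]; exact hyLb
        · exact h
      have hbndR : ∀ y ∈ BR, lo ≤ y.2 ∧ y.2 ≤ hiR := by
        intro y hy
        rcases Clo_letter D hy with h | h
        · rw [h]; exact hyRb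
        · exact h
      -- disjointness of the state projections of the two children
      have hdisj : Disjoint (Prod.fst '' BL) (Prod.fst '' BR) := by
        rw [Set.disjoint_left]
        rintro r ⟨zL, hzL, hzL1⟩ ⟨zR, hzR, hzR1⟩
        -- tours of the two children
        obtain ⟨lL, hLne, hLok, hLloop, hLhead, hLlet, hLvis⟩ :=
          tour D loL hi (Fin.le_def.2 (by omega)) yL hyLb hminL zL hzL
        obtain ⟨lR, hRne, hRok, hRloop, hRhead, hRlet, hRvis⟩ :=
          tour D lo hiR (Fin.le_def.2 (by omega)) yR hyRb hminR zR hzR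
        rw [← hBL] at hLvis
        rw [← hBR] at hRvis
        have hzLbnd := hbndL zL hzL
        have hzRbnd := hbndR zR hzR
        -- the three loops and their state sets
        have hrunL : D.run zL.1 lL = zL.1 := by
          have := esteps_fst D zL lL
          rw [hLloop] at this
          exact this.symm
        have hrunR : D.run zR.1 lR = zR.1 := by
          have := esteps_fst D zR lR
          rw [hRloop] at this
          exact this.symm
        have hVL : {p | ∃ t ≤ lL.length, D.run zL.1 (lL.take t) = p} = Prod.fst '' BL := by
          rw [← hLvis]
          ext p
          constructor
          · rintro ⟨t, ht, rfl⟩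
            exact ⟨esteps D zL (lL.take t), ⟨t, ht, rfl⟩, esteps_fst D zL _⟩
          · rintro ⟨y, ⟨t, ht, rfl⟩, rfl⟩
            exact ⟨t, ht, (esteps_fst D zL _).symm⟩
        have hVR : {p | ∃ t ≤ lR.length, D.run zR.1 (lR.take t) = p} = Prod.fst '' BR := by
          rw [← hRvis]
          ext p
          constructor
          · rintro ⟨t, ht, rfl⟩
            exact ⟨esteps D zR (lR.take t), ⟨t, ht, rfl⟩, esteps_fst D zR _⟩
          · rintro ⟨y, ⟨t, ht, rfl⟩, rfl⟩
            exact ⟨t, ht, (esteps_fst D zR _).symm⟩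
        -- Rinit for the tour basepoints
        have hRizL : Rinit D zL := Rinit_extend D hRi (hBLB hzL)
        have hRizR : Rinit D zR := Rinit_extend D hRi (hBRB hzR)
        -- bridge for the left loop
        have hbrL := bridge D κ hrec zL hRizL lL hLne hLok.2 hLloop
        have hbrR := bridge D κ hrec zR hRizR lR hRne hRok.2 hRloop
        -- letter sets
        have hsetL : {a : Fin n | a ∈ lL} = Set.Icc loL hi := by
          ext c
          rw [Set.mem_setOf_eq, Set.mem_Icc]
          exact hLlet c
        have hsetR : {a : Fin n | a ∈ lR} = Set.Icc lo hiR := by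
          ext c
          rw [Set.mem_setOf_eq, Set.mem_Icc]
          exact hRlet c
        have hcardL : ({a : Fin n | a ∈ lL}).ncard = d + 1 := by
          rw [hsetL, ← Finset.coe_Icc, Set.ncard_coe_finset, Fin.card_Icc]
          simp [hloL]
          omega
        have hcardR : ({a : Fin n | a ∈ lR}).ncard = d + 1 := by
          rw [hsetR, ← Finset.coe_Icc, Set.ncard_coe_finset, Fin.card_Icc]
          simp [hhiR]
          omega
        rw [hVL, hcardL] at hbrL
        rw [hVR, hcardR] at hbrR
        -- the combined loop at zR
        have hzz : zL.1 = zR.1 := by rw [hzL1, hzR1]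
        have hstepsRL : esteps D zR lL = zL := by
          rw [esteps_eq]
          have h1 : D.run zR.1 lL = zL.1 := by rw [← hzz, hrunL]
          have h2 : lL.getLastD zR.2 = zL.2 := by
            rw [getLastD_eq_getLast hLne, ← esteps_snd D zL lL hLne, hLloop]
          rw [h1, h2]
        have hstepsLR : esteps D zL lR = zR := by
          rw [esteps_eq]
          have h1 : D.run zL.1 lR = zR.1 := by rw [hzz, hrunR]
          have h2 : lR.getLastD zL.2 = zR.2 := by
            rw [getLastD_eq_getLast hRne, ← esteps_snd D zR lR hRne, hRloop]
          rw [h1, h2]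
        have hWloop : esteps D zR (lL ++ lR) = zR := by
          rw [esteps_append, hstepsRL, hstepsLR]
        have hWchain : List.Chain Rel zR.2 (lL ++ lR) := by
          have hch1 : List.Chain Rel zR.2 lL := by
            refine chain_head hLok.2 ?_
            intro c hc
            rw [hLhead] at hc
            cases hc
            show loL.val ≤ zR.2.val + 1
            have := Fin.le_def.1 hzRbnd.1
            simp only [hloL]
            omega
          have hch2 : List.Chain Rel zL.2 lR := by
            refine chain_head hRok.2 ?_
            intro c hc
            rw [hRhead] at hc
            cases hc
            show lo.val ≤ zL.2.val + 1
            omega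
          refine chain_comp hch1 ?_
          have : lL.getLastD zR.2 = zL.2 := by
            rw [getLastD_eq_getLast hLne, ← esteps_snd D zL lL hLne, hLloop]
          rwa [this]
        have hWne : lL ++ lR ≠ [] := by simp [hLne]
        have hbrW := bridge D κ hrec zR hRizR (lL ++ lR) hWne hWchain hWloop
        -- the combined loop's states
        have hVW : {p | ∃ t ≤ (lL ++ lR).length, D.run zR.1 ((lL ++ lR).take t) = p}
            = Prod.fst '' BL ∪ Prod.fst '' BR := by
          ext p
          constructor
          · rintro ⟨t, ht, rfl⟩
            by_cases htL : t ≤ lL.length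
            · left
              rw [← hVL]
              refine ⟨t, htL, ?_⟩
              rw [List.take_append_of_le_length htL, hzz]
            · right
              rw [← hVR]
              have hts : t = lL.length + (t - lL.length) := by omega
              refine ⟨t - lL.length, by simp at ht; omega, ?_⟩
              rw [hts, List.take_length_add_append, run_append]
              have hzrl : D.run zR.1 lL = zR.1 := by
                have := hrunL
                rw [hzz] at this
                exact this
              rw [hzrl, show lL.length + (t - lL.length) - lL.length = t - lL.length
                from by omega]
          · rintro (hp | hp)
            · rw [← hVL] at hp
              obtain ⟨t, ht, rfl⟩ := hp
              refine ⟨t, by simp only [List.length_append]; omega, ?_⟩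
              rw [List.take_append_of_le_length ht, hzz]
            · rw [← hVR] at hp
              obtain ⟨t, ht, rfl⟩ := hp
              refine ⟨lL.length + t, by simp only [List.length_append]; omega, ?_⟩
              rw [List.take_length_add_append, run_append]
              have hzrl : D.run zR.1 lL = zR.1 := by
                have := hrunL
                rw [hzz] at this
                exact this
              rw [hzrl]
        -- letters of the combined loop
        have hsetW : {a : Fin n | a ∈ lL ++ lR} = Set.Icc lo hi := by
          ext c
          rw [Set.mem_setOf_eq, Set.mem_Icc, List.mem_append, hLlet, hRlet]
          constructor
          · rintro (⟨h1, h2⟩ | ⟨h1, h2⟩)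
            · exact ⟨le_trans (Fin.le_def.2 (by omega)) h1, h2⟩
            · refine ⟨h1, le_trans h2 (Fin.le_def.2 (by omega))⟩
          · rintro ⟨h1, h2⟩
            by_cases hc : loL ≤ c
            · exact Or.inl ⟨hc, h2⟩
            · right
              have hc' : c.val ≤ lo.val := by
                have := Fin.lt_def.1 (lt_of_not_ge hc)
                omega
              exact ⟨h1, Fin.le_def.2 (by omega)⟩
        have hcardW : ({a : Fin n | a ∈ lL ++ lR}).ncard = d + 2 := by
          rw [hsetW, ← Finset.coe_Icc, Set.ncard_coe_finset, Fin.card_Icc]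
          omega
        rw [hVW, hcardW] at hbrW
        -- extract the contradiction
        have hneL : (κ '' (Prod.fst '' BL)).Nonempty :=
          ⟨κ yL.1, yL.1, ⟨yL, self_mem_Clo D _ _ _, rfl⟩, rfl⟩
        have hneR : (κ '' (Prod.fst '' BR)).Nonempty :=
          ⟨κ yR.1, yR.1, ⟨yR, self_mem_Clo D _ _ _, rfl⟩, rfl⟩
        rw [Set.image_union, sInf_union_min hneL hneR] at hbrW
        have hodd1 : Odd (min (sInf (κ '' (Prod.fst '' BL))) (sInf (κ '' (Prod.fst '' BR))))
            ↔ Odd (d + 1) := by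
          rcases min_cases (sInf (κ '' (Prod.fst '' BL))) (sInf (κ '' (Prod.fst '' BR))) with
            ⟨h, _⟩ | ⟨h, _⟩
          · rw [h]; exact hbrL
          · rw [h]; exact hbrR
        rw [hbrW] at hodd1
        have := Nat.odd_add_one (n := d + 1)
        rw [show d + 1 + 1 = d + 2 by omega] at this
        tauto
      -- counting
      have hsub : Prod.fst '' BL ∪ Prod.fst '' BR ⊆ Prod.fst '' B := by
        rintro p (⟨z, hz, rfl⟩ | ⟨z, hz, rfl⟩)
        · exact ⟨z, hBLB hz, rfl⟩
        · exact ⟨z, hBRB hz, rfl⟩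
      calc 2 ^ (d + 1) = 2 ^ d + 2 ^ d := by ring
        _ ≤ (Prod.fst '' BL).ncard + (Prod.fst '' BR).ncard := Nat.add_le_add hIHL hIHR
        _ = (Prod.fst '' BL ∪ Prod.fst '' BR).ncard :=
            (Set.ncard_union_eq hdisj (Set.toFinite _) (Set.toFinite _)).symm
        _ ≤ (Prod.fst '' B).ncard := Set.ncard_le_ncard hsub (Set.toFinite _)

end LnLB
/-- Every deterministic parity automaton recognizing `L_n` has at
least `2^(n-1)` states. -/
theorem dpa_for_Ln_lower_bound (n : ℕ) (hn : 0 < n) (D : DetAuto (Fin n))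
    (κ : D.State → ℕ) (hrec : ∀ w : ℕ → Fin n, parityAccepts D κ w ↔ w ∈ LnSet n) :
    2 ^ (n - 1) ≤ Fintype.card D.State := by
  haveI : NeZero n := ⟨hn.ne'⟩
  set lo0 : Fin n := ⟨0, hn⟩ with hlo0
  set hi0 : Fin n := ⟨n - 1, by omega⟩ with hhi0
  have hlo0v : lo0.val = 0 := rfl
  have hhi0v : hi0.val = n - 1 := rfl
  set xs : LnLB.E D := (D.step D.init lo0, lo0) with hxs
  have hxs2 : xs.2 = lo0 := rfl
  have hRixs : LnLB.Rinit D xs :=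
    ⟨[lo0], by simp, List.isChain_singleton _, rfl, rfl⟩
  obtain ⟨x₀, hx₀mem, hx₀b, hmin⟩ := LnLB.exists_bottom D lo0 hi0 xs
    (by rw [hxs2]; exact ⟨le_refl _, Fin.le_def.2 (by omega)⟩)
  have hRix₀ : LnLB.Rinit D x₀ := LnLB.Rinit_extend D hRixs hx₀mem
  have hmain := LnLB.main D κ hrec (n - 1) lo0 hi0 (by omega) x₀ hx₀b.1 hx₀b.2 hRix₀ hmin
  refine le_trans hmain ?_
  have h1 : (Prod.fst '' LnLB.Clo D lo0 hi0 x₀).ncard ≤ (Set.univ : Set D.State).ncard :=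
    Set.ncard_le_ncard (Set.subset_univ _) (Set.toFinite _)
  rwa [Set.ncard_univ, Nat.card_eq_fintype_card] at h1
end
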